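/- arXiv:2605.22965 — 2 statements merged into one kernel-verified Lean document; each statement's English description precedes it below -/
import Mathlib

section
/- Certainty-equivalent rollout bound: suppose V* is bounded with V*(t) = 0 and V* = T V*, V is bounded with V(t) = 0 and ‖V − V*‖∞ ≤ ε, δ is the certainty-equivalent model-mismatch constant, π_CE is the certainty-equivalent policy built from V and the nominal disturbance w̄, and π_CE is proper from the initial state x. Then J^{π_CE}(x) − V*(x) ≤ 2(ε + δ) · E[τ], where τ is the hitting time of the terminal state under π_CE. -/
open MeasureTheory ProbabilityTheory Filter
open scoped ENNReal
open scoped Topology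

open Classical in
/-- Bellman operator of the SSP: `(T V)(x) = inf_{u ∈ U(x)} ( f(x,u) + ∫ V(F(x,u,w)) dμ(w) )`
for nonterminal `x`, and `(T V)(t) = 0`. -/
noncomputable def bellman {X U W : Type*} [MeasurableSpace W] (μ : Measure W)
    (t : X) (Ua : X → Set U) (f : X → U → ℝ) (F : X → U → W → X)
    (V : X → ℝ) (x : X) : ℝ :=
  if x = t then 0 else ⨅ u : Ua x, (f x (u : U) + ∫ w, V (F x (u : U) w) ∂μ)

/-- Closed-loop trajectory driven by a disturbance sequence `ω : ℕ → W`: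
`x₀ = x`, `x_{k+1} = F(x_k, π(x_k), ω_k)`. -/
def traj {X U W : Type*} (F : X → U → W → X) (π : X → U) (x : X) (ω : ℕ → W) : ℕ → X
  | 0 => x
  | k + 1 => F (traj F π x ω k) (π (traj F π x ω k)) (ω k)

/-- The trajectory as a family of random variables on an abstract sample space `Ω`,
given the disturbance random variables `ξ k : Ω → W`. -/
def trajOn {X U W Ω : Type*} (F : X → U → W → X) (π : X → U) (x : X)
    (ξ : ℕ → Ω → W) (k : ℕ) (ω : Ω) : X :=
  traj F π x (fun i => ξ i ω) k

/-- Hitting time `τ = inf { k ≥ 0 : x_k = t }` of the terminal state (`∞` if never reached),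
valued in `ℝ≥0∞`. -/
noncomputable def hitTime {X Ω : Type*} (t : X) (Y : ℕ → Ω → X) (ω : Ω) : ℝ≥0∞ :=
  ⨅ (k : ℕ) (_ : Y k ω = t), (k : ℝ≥0∞)

/-- Total expected cost `J = E[ Σ_{k=0}^{τ-1} f(x_k, π(x_k)) ]` (in `ℝ≥0∞`; the stage cost
is nonnegative). -/
noncomputable def totalCost {X U Ω : Type*} [MeasurableSpace Ω] (P : Measure Ω)
    (t : X) (f : X → U → ℝ) (π : X → U) (Y : ℕ → Ω → X) : ℝ≥0∞ :=
  ∫⁻ ω, ∑' (k : ℕ), (if (k : ℝ≥0∞) < hitTime t Y ω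
    then ENNReal.ofReal (f (Y k ω) (π (Y k ω))) else 0) ∂P

/-- Expected hitting time `E[τ]` (in `ℝ≥0∞`). -/
noncomputable def expHit {X Ω : Type*} [MeasurableSpace Ω] (P : Measure Ω)
    (t : X) (Y : ℕ → Ω → X) : ℝ≥0∞ :=
  ∫⁻ ω, hitTime t Y ω ∂P

/- ### Auxiliary lemmas -/

lemma traj_congr {X U W : Type*} (F : X → U → W → X) (π : X → U) (x : X) {ω ω' : ℕ → W} :
    ∀ k, (∀ i, i < k → ω i = ω' i) → traj F π x ω k = traj F π x ω' k
  | 0, _ => rfl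
  | k + 1, h => by
    have ih := traj_congr F π x k fun i hi => h i (hi.trans (Nat.lt_succ_self k))
    simp only [traj, ih, h k (Nat.lt_succ_self k)]

lemma ennreal_coe_ereal_eq {b : ℝ≥0∞} (hb : b ≠ ⊤) : (b : EReal) = ((b.toReal : ℝ) : EReal) := by
  conv_lhs => rw [← ENNReal.ofReal_toReal hb]
  rw [EReal.coe_ennreal_ofReal, max_eq_left ENNReal.toReal_nonneg]

/-- Integrability of a bounded (everywhere) a.e.-strongly-measurable function w.r.t. a
finite measure. -/
lemma integrable_of_abs_le {Ω : Type*} [MeasurableSpace Ω] {P : Measure Ω} [IsFiniteMeasure P]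
    {g : Ω → ℝ} (hg : AEStronglyMeasurable g P) {C : ℝ} (h : ∀ ω, |g ω| ≤ C) :
    Integrable g P :=
  (integrable_const C).mono' hg (Eventually.of_forall (by simpa [Real.norm_eq_abs] using h))

/-- Certainty-equivalent rollout bound: with `‖V - V*‖∞ ≤ ε`, model-mismatch constant `δ`, and
the certainty-equivalent policy `π_CE` proper from `x`,
`J^{π_CE}(x) - V*(x) ≤ 2(ε + δ) · E[τ]`, stated in `EReal`. -/
theorem certainty_equivalent_rollout_bound
    {X U W Ω : Type*} [MeasurableSpace X] [MeasurableSingletonClass X]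
    [MeasurableSpace U] [MeasurableSpace W] [MeasurableSpace Ω]
    (μ : Measure W) [IsProbabilityMeasure μ] (P : Measure Ω) [IsProbabilityMeasure P]
    (t : X) (u0 : U) (Ua : X → Set U) (F : X → U → W → X) (f : X → U → ℝ)
    -- SSP model: nonempty control sets, nonnegative measurable stage cost, measurable dynamics,
    -- absorbing cost-free terminal state
    (hUne : ∀ y, (Ua y).Nonempty) (hfnn : ∀ y u, 0 ≤ f y u)
    (hFmeas : Measurable fun p : X × U × W => F p.1 p.2.1 p.2.2)
    (hfmeas : Measurable fun p : X × U => f p.1 p.2)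
    (hUt : Ua t = {u0}) (hft : f t u0 = 0) (hFt : ∀ w, F t u0 w = t)
    -- V* : bounded measurable, V*(t)=0, Bellman fixed point, well-defined one-step integrals
    (Vstar : X → ℝ) (hVsmeas : Measurable Vstar) (hVsbdd : ∃ C, ∀ y, |Vstar y| ≤ C)
    (hVst : Vstar t = 0) (hVsfix : ∀ y, Vstar y = bellman μ t Ua f F Vstar y)
    (hVsint : ∀ y u, Integrable (fun w => Vstar (F y u w)) μ)
    -- V : bounded measurable surrogate with V(t)=0 and ‖V - V*‖∞ ≤ ε
    (V : X → ℝ) (hVmeas : Measurable V) (hVbdd : ∃ C, ∀ y, |V y| ≤ C) (hVt : V t = 0)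
    (hVint : ∀ y u, Integrable (fun w => V (F y u w)) μ)
    (ε : ℝ) (hε : 0 ≤ ε) (happrox : ∀ y, |V y - Vstar y| ≤ ε)
    -- model-mismatch constant δ: uniform bound on the nominal-vs-expected one-step evaluation
    (wbar : W) (δ : ℝ)
    (hδ : ∀ y, y ≠ t → ∀ u ∈ Ua y, |(∫ w, V (F y u w) ∂μ) - V (F y u wbar)| ≤ δ)
    -- the infimum defining (T V)(y) is attained at every nonterminal y
    (hTatt : ∀ y, y ≠ t → ∃ u ∈ Ua y, ∀ u' ∈ Ua y,
      f y u + ∫ w, V (F y u w) ∂μ ≤ f y u' + ∫ w, V (F y u' w) ∂μ)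
    (πCE : X → U) (hπmeas : Measurable πCE)
    -- certainty-equivalent policy: greedy for the nominal one-step lookahead, minimum attained
    (hπt : πCE t = u0)
    (hce : ∀ y, y ≠ t → πCE y ∈ Ua y ∧ ∀ u ∈ Ua y,
      f y (πCE y) + V (F y (πCE y) wbar) ≤ f y u + V (F y u wbar))
    -- i.i.d. disturbance sequence with common law μ on an abstract probability space
    (ξ : ℕ → Ω → W) (hξmeas : ∀ k, Measurable (ξ k))
    (hξindep : iIndepFun ξ P)
    (hξlaw : ∀ k, P.map (ξ k) = μ)
    -- properness of the closed loop from x: τ < ∞ a.s. and J(x) < ∞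
    (x : X)
    (hproper_tau : ∀ᵐ ω ∂P, hitTime t (trajOn F πCE x ξ) ω < ⊤)
    (hproper_J : totalCost P t f πCE (trajOn F πCE x ξ) < ⊤) :
    (totalCost P t f πCE (trajOn F πCE x ξ) : EReal)
      ≤ (Vstar x : EReal) +
        ((ENNReal.ofReal (2 * (ε + δ)) * expHit P t (trajOn F πCE x ξ) : ℝ≥0∞) : EReal) := by
  classical
  obtain ⟨C, hC⟩ := hVsbdd
  set c : ℝ := 2 * (ε + δ) with hc
  set cp : ℝ := max c 0 with hcp
  have hcp0 : 0 ≤ cp := le_max_right _ _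
  set Y : ℕ → Ω → X := trajOn F πCE x ξ with hYdef
  -- basic facts about the trajectory
  have hYsucc : ∀ n ω, Y (n + 1) ω = F (Y n ω) (πCE (Y n ω)) (ξ n ω) := fun n ω => rfl
  have hY0 : ∀ ω, Y 0 ω = x := fun ω => rfl
  have habs : ∀ ω k m, k ≤ m → Y k ω = t → Y m ω = t := by
    intro ω k m hkm hk
    induction m, hkm using Nat.le_induction with
    | base => exact hk
    | succ m hm ih => rw [hYsucc, ih, hπt, hFt]
  have hYmeas : ∀ k, Measurable (Y k) := by
    intro k
    induction k with
    | zero => simpa [funext hY0] using measurable_const (a := x)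
    | succ k ih =>
      have : (fun ω => Y (k+1) ω) = fun ω => F (Y k ω) (πCE (Y k ω)) (ξ k ω) :=
        funext (hYsucc k)
      rw [show Y (k+1) = fun ω => F (Y k ω) (πCE (Y k ω)) (ξ k ω) from this]
      exact hFmeas.comp (ih.prodMk ((hπmeas.comp ih).prodMk (hξmeas k)))
  -- characterization of the hitting time
  have hlt_iff : ∀ ω (k : ℕ), ((k : ℝ≥0∞) < hitTime t Y ω) ↔ Y k ω ≠ t := by
    intro ω k
    constructor
    · intro hlt hk
      exact absurd (hlt.trans_le (iInf₂_le k hk)) (lt_irrefl _)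
    · intro hk
      have h1 : ((k : ℝ≥0∞) + 1) ≤ hitTime t Y ω := by
        refine le_iInf fun j => le_iInf fun hj => ?_
        have hkj : k < j := by
          by_contra h
          push_neg at h
          exact hk (habs ω j k h hj)
        calc ((k : ℝ≥0∞) + 1) = ((k + 1 : ℕ) : ℝ≥0∞) := by push_cast; ring
          _ ≤ (j : ℝ≥0∞) := Nat.cast_le.mpr hkj
      exact lt_of_lt_of_le (ENNReal.lt_add_right (ENNReal.natCast_ne_top k) one_ne_zero) h1
  -- totalCost as a sum of one-stage expected costs
  set a : ℕ → ℝ≥0∞ := fun k => ∫⁻ ω, ENNReal.ofReal (f (Y k ω) (πCE (Y k ω))) ∂P with ha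
  have hfYmeas : ∀ k, Measurable fun ω => f (Y k ω) (πCE (Y k ω)) := fun k =>
    hfmeas.comp ((hYmeas k).prodMk (hπmeas.comp (hYmeas k)))
  have hTC : totalCost P t f πCE Y = ∑' k, a k := by
    have hpt : ∀ ω (k : ℕ), (if (k : ℝ≥0∞) < hitTime t Y ω
        then ENNReal.ofReal (f (Y k ω) (πCE (Y k ω))) else 0)
        = ENNReal.ofReal (f (Y k ω) (πCE (Y k ω))) := by
      intro ω k
      by_cases hk : Y k ω = t
      · rw [if_neg (by simpa [hlt_iff ω k] using hk), hk, hπt, hft]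
        simp
      · rw [if_pos ((hlt_iff ω k).mpr hk)]
    calc totalCost P t f πCE Y
        = ∫⁻ ω, ∑' k, ENNReal.ofReal (f (Y k ω) (πCE (Y k ω))) ∂P := by
          unfold totalCost
          congr 1
          funext ω
          exact tsum_congr fun k => hpt ω k
      _ = ∑' k, a k :=
          lintegral_tsum fun k => ((hfYmeas k).ennreal_ofReal).aemeasurable
  have hak_le : ∀ k, a k ≤ totalCost P t f πCE Y := by
    intro k; rw [hTC]; exact ENNReal.le_tsum k
  have hak_lt : ∀ k, a k < ⊤ := fun k => lt_of_le_of_lt (hak_le k) hproper_J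
  have hint_f : ∀ k, Integrable (fun ω => f (Y k ω) (πCE (Y k ω))) P := by
    intro k
    refine ⟨(hfYmeas k).aestronglyMeasurable, ?_⟩
    rw [hasFiniteIntegral_iff_ofReal (Eventually.of_forall fun ω => hfnn _ _)]
    exact hak_lt k
  set s : ℕ → ℝ := fun k => ∫ ω, f (Y k ω) (πCE (Y k ω)) ∂P with hs
  have hs_nonneg : ∀ k, 0 ≤ s k := fun k => integral_nonneg fun ω => hfnn _ _
  have h_ak : ∀ k, a k = ENNReal.ofReal (s k) := fun k =>
    (ofReal_integral_eq_lintegral_ofReal (hint_f k)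
      (Eventually.of_forall fun ω => hfnn _ _)).symm
  -- the expected one-step-ahead value function
  set H : X × W → ℝ := fun p => Vstar (F p.1 (πCE p.1) p.2) with hH
  have hHmeas : Measurable H :=
    hVsmeas.comp (hFmeas.comp (measurable_fst.prodMk
      ((hπmeas.comp measurable_fst).prodMk measurable_snd)))
  have hHbd : ∀ p, |H p| ≤ C := fun p => hC _
  set G : X → ℝ := fun y => ∫ w, Vstar (F y (πCE y) w) ∂μ with hG
  have hGsm : StronglyMeasurable G := hHmeas.stronglyMeasurable.integral_prod_right'
  have hGbd : ∀ y, |G y| ≤ C := by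
    intro y
    have h := norm_integral_le_of_norm_le_const
      (μ := μ) (f := fun w => Vstar (F y (πCE y) w)) (C := C)
      (Eventually.of_forall fun w => by simpa [Real.norm_eq_abs] using hC (F y (πCE y) w))
    simpa [Real.norm_eq_abs, measure_univ] using h
  -- key identity via independence
  have hkey : ∀ n, ∫ ω, Vstar (Y (n+1) ω) ∂P = ∫ ω, G (Y n ω) ∂P := by
    intro n
    -- independence of `Y n` and `ξ n`
    have hindep : IndepFun (Y n) (ξ n) P := by
      set S : Finset ℕ := Finset.range n with hS
      set T : Finset ℕ := {n} with hT
      have hST : Disjoint S T := by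
        simp [hS, hT, Finset.disjoint_singleton_right]
      have hbase := hξindep.indepFun_finset S T hST hξmeas
      -- `Y n` as a measurable function of the first `n` disturbances
      set ext : (S → W) → (ℕ → W) := fun v i => if h : i ∈ S then v ⟨i, h⟩ else wbar with hext
      set g : (S → W) → X := fun v => traj F πCE x (ext v) n with hg
      have hgmeas : Measurable g := by
        have key : ∀ k, k ≤ n → Measurable fun v : S → W => traj F πCE x (ext v) k := by
          intro k
          induction k with
          | zero => intro _; simpa [traj] using measurable_const (a := x)
          | succ k ih =>
            intro hk
            have ihm := ih (le_of_lt (Nat.lt_of_succ_le hk))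
            have hkS : k ∈ S := by simp [hS, Finset.mem_range]; omega
            have hco : (fun v : S → W => traj F πCE x (ext v) (k+1))
                = fun v => F (traj F πCE x (ext v) k) (πCE (traj F πCE x (ext v) k))
                    (v ⟨k, hkS⟩) := by
              funext v
              simp only [traj]
              congr 1
              simp [hext, hkS]
            rw [hco]
            exact hFmeas.comp (ihm.prodMk ((hπmeas.comp ihm).prodMk
              (measurable_pi_apply _)))
        exact key n le_rfl
      have hYeq : Y n = g ∘ (fun ω (i : S) => ξ i ω) := by
        funext ω
        show traj F πCE x (fun i => ξ i ω) n = traj F πCE x (ext fun i : S => ξ i ω) n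
        refine traj_congr F πCE x n fun i hi => ?_
        have hiS : i ∈ S := by simp [hS, Finset.mem_range, hi]
        simp [hext, hiS]
      have hnT : n ∈ T := by simp [hT]
      have hξeq : ξ n = (fun v : T → W => v ⟨n, hnT⟩) ∘ (fun ω (i : T) => ξ i ω) := rfl
      rw [hYeq, hξeq]
      exact hbase.comp hgmeas (measurable_pi_apply _)
    haveI : IsProbabilityMeasure (P.map (Y n)) :=
      Measure.isProbabilityMeasure_map (hYmeas n).aemeasurable
    have hmap : P.map (fun ω => (Y n ω, ξ n ω)) = (P.map (Y n)).prod μ := by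
      rw [← hξlaw n]
      exact (indepFun_iff_map_prod_eq_prod_map_map
        (hYmeas n).aemeasurable (hξmeas n).aemeasurable).mp hindep
    have hHint : Integrable H ((P.map (Y n)).prod μ) :=
      integrable_of_abs_le hHmeas.aestronglyMeasurable hHbd
    calc ∫ ω, Vstar (Y (n+1) ω) ∂P
        = ∫ ω, H (Y n ω, ξ n ω) ∂P := by
          congr 1
      _ = ∫ p, H p ∂(P.map fun ω => (Y n ω, ξ n ω)) :=
          (integral_map ((hYmeas n).prodMk (hξmeas n)).aemeasurable
            hHmeas.aestronglyMeasurable).symm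
      _ = ∫ p, H p ∂((P.map (Y n)).prod μ) := by rw [hmap]
      _ = ∫ y, ∫ w, H (y, w) ∂μ ∂(P.map (Y n)) := integral_prod H hHint
      _ = ∫ y, G y ∂(P.map (Y n)) := rfl
      _ = ∫ ω, G (Y n ω) ∂P :=
          integral_map (hYmeas n).aemeasurable hGsm.aestronglyMeasurable
  -- the one-step inequality
  have hstep : ∀ y, f y (πCE y) + G y ≤ Vstar y + (if y = t then 0 else cp) := by
    intro y
    by_cases hy : y = t
    · subst hy
      have hG0 : G y = 0 := by
        simp [hG, hπt, hFt, hVst]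
      simp [hπt, hft, hVst, hG0]
    · obtain ⟨huU, hopt⟩ := hce y hy
      have hVVs : ∀ u, (∫ w, Vstar (F y u w) ∂μ) ≤ (∫ w, V (F y u w) ∂μ) + ε := by
        intro u
        have hpt : ∀ w, Vstar (F y u w) ≤ V (F y u w) + ε := by
          intro w
          have := abs_le.mp (happrox (F y u w))
          linarith [this.1]
        calc (∫ w, Vstar (F y u w) ∂μ) ≤ ∫ w, (V (F y u w) + ε) ∂μ :=
              integral_mono (hVsint y u) ((hVint y u).add (integrable_const ε)) hpt
          _ = (∫ w, V (F y u w) ∂μ) + ε := by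
              rw [integral_add (hVint y u) (integrable_const ε)]
              simp [measure_univ]
      have hVsV : ∀ u, (∫ w, V (F y u w) ∂μ) ≤ (∫ w, Vstar (F y u w) ∂μ) + ε := by
        intro u
        have hpt : ∀ w, V (F y u w) ≤ Vstar (F y u w) + ε := by
          intro w
          have := abs_le.mp (happrox (F y u w))
          linarith [this.2]
        calc (∫ w, V (F y u w) ∂μ) ≤ ∫ w, (Vstar (F y u w) + ε) ∂μ :=
              integral_mono (hVint y u) ((hVsint y u).add (integrable_const ε)) hpt
          _ = (∫ w, Vstar (F y u w) ∂μ) + ε := by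
              rw [integral_add (hVsint y u) (integrable_const ε)]
              simp [measure_univ]
      haveI : Nonempty (Ua y) := (hUne y).to_subtype
      have hlb : ∀ u' : Ua y, f y (πCE y) + G y - c ≤
          f y (u' : U) + ∫ w, Vstar (F y (u' : U) w) ∂μ := by
        rintro ⟨u', hu'⟩
        have hA := hVVs (πCE y)
        have hB := abs_le.mp (hδ y hy (πCE y) huU)
        have hCc := hopt u' hu'
        have hD := abs_le.mp (hδ y hy u' hu')
        have hE := hVsV u'
        simp only [hG, hc]
        linarith [hB.1, hB.2, hD.1, hD.2]
      have hinf : f y (πCE y) + G y - c ≤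
          ⨅ u : Ua y, (f y (u : U) + ∫ w, Vstar (F y (u : U) w) ∂μ) := le_ciInf hlb
      have hbel : Vstar y = ⨅ u : Ua y, (f y (u : U) + ∫ w, Vstar (F y (u : U) w) ∂μ) := by
        rw [hVsfix y]
        simp [bellman, hy]
      rw [if_neg hy]
      have hccp : c ≤ cp := le_max_left _ _
      rw [← hbel] at hinf
      linarith
    -- expected-value recursion along the trajectory
  set b : ℕ → ℝ := fun n => ∫ ω, Vstar (Y n ω) ∂P with hb
  set Pn : ℕ → ℝ := fun n => (P {ω | Y n ω ≠ t}).toReal with hPn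
  have hsetmeas : ∀ n, MeasurableSet {ω | Y n ω ≠ t} := by
    intro n
    have : {ω | Y n ω ≠ t} = (Y n ⁻¹' {t})ᶜ := by ext ω; simp
    rw [this]
    exact ((hYmeas n) (measurableSet_singleton t)).compl
  have hind : ∀ n, (∑ k ∈ Finset.range n, s k) + b n
      ≤ Vstar x + cp * ∑ k ∈ Finset.range n, Pn k := by
    intro n
    induction n with
    | zero =>
      have h0 : (fun ω => Vstar (Y 0 ω)) = fun _ : Ω => Vstar x := funext fun ω => by rw [hY0]
      simp [hb, h0, measure_univ]
    | succ n ih =>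
      have IVn : Integrable (fun ω => Vstar (Y n ω)) P :=
        integrable_of_abs_le (hVsmeas.comp (hYmeas n)).aestronglyMeasurable (fun ω => hC _)
      have IGn : Integrable (fun ω => G (Y n ω)) P :=
        integrable_of_abs_le (hGsm.measurable.comp (hYmeas n)).aestronglyMeasurable
          (fun ω => hGbd _)
      have hIeq : (fun ω => (if Y n ω = t then (0:ℝ) else cp))
          = Set.indicator {ω | Y n ω ≠ t} (fun _ => cp) := by
        funext ω
        by_cases h : Y n ω = t <;> simp [Set.indicator_apply, h]
      have Iind : Integrable (fun ω => (if Y n ω = t then (0:ℝ) else cp)) P := by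
        rw [hIeq]
        exact (integrable_const cp).indicator (hsetmeas n)
      have hmono : ∫ ω, (f (Y n ω) (πCE (Y n ω)) + G (Y n ω)) ∂P
          ≤ ∫ ω, (Vstar (Y n ω) + (if Y n ω = t then (0:ℝ) else cp)) ∂P :=
        integral_mono ((hint_f n).add IGn) (IVn.add Iind) (fun ω => hstep (Y n ω))
      have hL : ∫ ω, (f (Y n ω) (πCE (Y n ω)) + G (Y n ω)) ∂P = s n + b (n+1) := by
        rw [integral_add (hint_f n) IGn, ← hkey n]
      have hR : ∫ ω, (Vstar (Y n ω) + (if Y n ω = t then (0:ℝ) else cp)) ∂P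
          = b n + cp * Pn n := by
        rw [integral_add IVn Iind, hIeq, integral_indicator_const _ (hsetmeas n)]
        simp [hb, hPn, mul_comm, Measure.real]
      rw [hL, hR] at hmono
      rw [Finset.sum_range_succ, Finset.sum_range_succ]
      have hPn_nn : (0:ℝ) ≤ Pn n := ENNReal.toReal_nonneg
      have hexp : cp * (∑ k ∈ Finset.range n, Pn k + Pn n)
          = cp * ∑ k ∈ Finset.range n, Pn k + cp * Pn n := by ring
      rw [hexp]
      linarith
  -- the terminal state is reached, so the value at the trajectory tail vanishes in the limit
  have hbtend : Tendsto b atTop (𝓝 0) := by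
    have h := tendsto_integral_of_dominated_convergence (μ := P)
      (F := fun n ω => Vstar (Y n ω)) (f := fun _ => (0:ℝ)) (bound := fun _ => C)
      (fun n => (hVsmeas.comp (hYmeas n)).aestronglyMeasurable)
      (integrable_const C)
      (fun n => Eventually.of_forall fun ω => by
        simpa [Real.norm_eq_abs] using hC (Y n ω))
      (by
        filter_upwards [hproper_tau] with ω hω
        have hex : ∃ k, Y k ω = t := by
          by_contra h
          push_neg at h
          have : hitTime t Y ω = ⊤ := by simp [hitTime, h]
          rw [this] at hω
          exact absurd hω (lt_irrefl _)
        obtain ⟨k0, hk0⟩ := hex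
        have hev : ∀ᶠ n in atTop, Vstar (Y n ω) = 0 := by
          filter_upwards [eventually_ge_atTop k0] with n hn
          rw [habs ω k0 n hn hk0, hVst]
        exact Tendsto.congr' (by filter_upwards [hev] with n hn; exact hn.symm)
          tendsto_const_nhds)
    simpa using h
  -- comparing the expected hitting time with the sum of survival probabilities
  have hindic_meas : ∀ k, Measurable fun ω => (if Y k ω ≠ t then (1:ℝ≥0∞) else 0) := fun k =>
    Measurable.ite (hsetmeas k) measurable_const measurable_const
  have hptsum : ∀ ω n, (∑ k ∈ Finset.range n, (if Y k ω ≠ t then (1:ℝ≥0∞) else 0))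
      ≤ hitTime t Y ω := by
    intro ω n
    by_cases hall : ∀ k, k < n → Y k ω ≠ t
    · have hterm : ∀ k ∈ Finset.range n, (if Y k ω ≠ t then (1:ℝ≥0∞) else 0) = 1 := by
        intro k hk
        rw [if_pos (hall k (Finset.mem_range.mp hk))]
      rw [Finset.sum_congr rfl hterm, Finset.sum_const, Finset.card_range, nsmul_eq_mul, mul_one]
      refine le_iInf fun j => le_iInf fun hj => Nat.cast_le.mpr ?_
      by_contra h
      push_neg at h
      exact hall j h hj
    · push_neg at hall
      obtain ⟨k1, hk1n, hk1⟩ := hall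
      have hex : ∃ k, Y k ω = t := ⟨k1, hk1⟩
      have hk0 := Nat.find_spec hex
      set k0 := Nat.find hex with hk0def
      have hk0n : k0 < n := lt_of_le_of_lt (Nat.find_min' hex hk1) hk1n
      have hterm : ∀ k ∈ Finset.range n, (if Y k ω ≠ t then (1:ℝ≥0∞) else 0)
          = (if k < k0 then 1 else 0) := by
        intro k _
        by_cases hk : k < k0
        · rw [if_pos hk, if_pos (Nat.find_min hex hk)]
        · push_neg at hk
          rw [if_neg, if_neg (not_lt.mpr hk)]
          simp only [ne_eq, not_not]
          exact habs ω k0 k hk hk0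
      rw [Finset.sum_congr rfl hterm, ← Finset.sum_filter]
      have hfilter : (Finset.range n).filter (fun k => k < k0) = Finset.range k0 := by
        ext k
        simp only [Finset.mem_filter, Finset.mem_range]
        omega
      rw [hfilter, Finset.sum_const, Finset.card_range, nsmul_eq_mul, mul_one]
      exact le_iInf fun j => le_iInf fun hj => Nat.cast_le.mpr (Nat.find_min' hex hj)
  have hEH : (∑' k, P {ω | Y k ω ≠ t}) ≤ expHit P t Y := by
    have h1 : ∀ k, P {ω | Y k ω ≠ t} = ∫⁻ ω, (if Y k ω ≠ t then (1:ℝ≥0∞) else 0) ∂P := by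
      intro k
      rw [← lintegral_indicator_one (hsetmeas k)]
      congr 1
      funext ω
      by_cases h : Y k ω ≠ t <;> simp [Set.indicator_apply, h]
    calc (∑' k, P {ω | Y k ω ≠ t})
        = ∑' k, ∫⁻ ω, (if Y k ω ≠ t then (1:ℝ≥0∞) else 0) ∂P := tsum_congr h1
      _ = ∫⁻ ω, ∑' k, (if Y k ω ≠ t then (1:ℝ≥0∞) else 0) ∂P :=
          (lintegral_tsum fun k => (hindic_meas k).aemeasurable).symm
      _ ≤ ∫⁻ ω, hitTime t Y ω ∂P := by
          refine lintegral_mono fun ω => ?_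
          rw [ENNReal.tsum_eq_iSup_nat]
          exact iSup_le fun n => hptsum ω n
      _ = expHit P t Y := rfl
  -- final assembly
  rcases eq_or_ne ((ENNReal.ofReal c) * expHit P t Y) ⊤ with htop | hfin
  · rw [htop, EReal.coe_ennreal_top, EReal.add_top_of_ne_bot (EReal.coe_ne_bot _)]
    exact le_top
  · set M : ℝ≥0∞ := ENNReal.ofReal c * expHit P t Y with hM
    have hTCne : totalCost P t f πCE Y ≠ ⊤ := hproper_J.ne
    have hsum_ne : (∑' k, a k) ≠ ⊤ := by rw [← hTC]; exact hTCne
    have htoReal : ∀ k, (a k).toReal = s k := fun k => by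
      rw [h_ak k, ENNReal.toReal_ofReal (hs_nonneg k)]
    have hsummable : Summable s := (ENNReal.summable_toReal hsum_ne).congr htoReal
    have hJreal : (totalCost P t f πCE Y).toReal = ∑' k, s k := by
      rw [hTC, ENNReal.tsum_toReal_eq (fun k => (hak_lt k).ne)]
      exact tsum_congr htoReal
    have hStend : Tendsto (fun n => ∑ k ∈ Finset.range n, s k) atTop (𝓝 (∑' k, s k)) :=
      hsummable.hasSum.tendsto_sum_nat
    have hofReal_c : ENNReal.ofReal c = ENNReal.ofReal cp := by
      rcases le_total c 0 with h | h
      · rw [ENNReal.ofReal_of_nonpos h, hcp, max_eq_right h, ENNReal.ofReal_zero]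
      · rw [hcp, max_eq_left h]
    have hbound : ∀ n, cp * ∑ k ∈ Finset.range n, Pn k ≤ M.toReal := by
      intro n
      by_cases hcpz : cp = 0
      · simp [hcpz, ENNReal.toReal_nonneg]
      · have hcppos : 0 < cp := lt_of_le_of_ne hcp0 (Ne.symm hcpz)
        have hne0 : ENNReal.ofReal cp ≠ 0 := by
          simp only [ne_eq, ENNReal.ofReal_eq_zero, not_le]
          exact hcppos
        have hEfin : expHit P t Y ≠ ⊤ := by
          intro h
          apply hfin
          rw [hM, hofReal_c, h, ENNReal.mul_top hne0]
        have hsum_eq : ∑ k ∈ Finset.range n, Pn k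
            = (∑ k ∈ Finset.range n, P {ω | Y k ω ≠ t}).toReal := by
          rw [ENNReal.toReal_sum (fun k _ => (measure_lt_top P _).ne)]
        have hle : (∑ k ∈ Finset.range n, P {ω | Y k ω ≠ t}) ≤ expHit P t Y :=
          le_trans (ENNReal.sum_le_tsum (Finset.range n)) hEH
        have hPle : ∑ k ∈ Finset.range n, Pn k ≤ (expHit P t Y).toReal := by
          rw [hsum_eq]
          exact ENNReal.toReal_mono hEfin hle
        have hmul : cp * ∑ k ∈ Finset.range n, Pn k ≤ cp * (expHit P t Y).toReal :=
          mul_le_mul_of_nonneg_left hPle hcp0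
        refine hmul.trans (le_of_eq ?_)
        rw [hM, hofReal_c, ENNReal.toReal_mul, ENNReal.toReal_ofReal hcp0]
    have hfinal : ∑' k, s k ≤ Vstar x + M.toReal := by
      have hle_n : ∀ n, ∑ k ∈ Finset.range n, s k ≤ Vstar x + M.toReal - b n := by
        intro n
        have h1 := hind n
        have h2 := hbound n
        linarith
      have htend2 : Tendsto (fun n => Vstar x + M.toReal - b n) atTop
          (𝓝 (Vstar x + M.toReal - 0)) := tendsto_const_nhds.sub hbtend
      have := le_of_tendsto_of_tendsto' hStend htend2 hle_n
      simpa using this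
    rw [ennreal_coe_ereal_eq hTCne, ennreal_coe_ereal_eq hfin, ← EReal.coe_add]
    exact EReal.coe_le_coe_iff.mpr (by rw [hJreal]; exact hfinal)
end

section
/- State-dependent certainty-equivalent bound: let π_CE be the certainty-equivalent policy, proper from x, and suppose V* is bounded with V*(t) = 0 and V* = T V*. If there are nonnegative measurable functions ε(·) and δ(·) on X such that the local one-step inequality f(x', π_CE(x')) + ∫ V*(F(x', π_CE(x'), w)) dμ(w) ≤ V*(x') + 2ε(x') + 2δ(x') holds at every nonterminal state x' visited by the closed loop, then J^{π_CE}(x) − V*(x) ≤ E[ Σ_{k=0}^{τ−1} ( 2ε(x_k) + 2δ(x_k) ) ]. -/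
open MeasureTheory ProbabilityTheory Filter
open scoped ENNReal

section CEAux
variable {X U W Ω : Type*} [MeasurableSpace X] [MeasurableSpace U] [MeasurableSpace W]
  [MeasurableSpace Ω]

omit [MeasurableSpace X] [MeasurableSpace U] [MeasurableSpace W] [MeasurableSpace Ω] in
lemma CEaux_traj_congr (F : X → U → W → X) (π : X → U) (x : X) {s s' : ℕ → W} :
    ∀ k, (∀ i < k, s i = s' i) → traj F π x s k = traj F π x s' k := by
  intro k
  induction k with
  | zero => intro _; rfl
  | succ n ih =>
    intro h
    have h1 : traj F π x s n = traj F π x s' n := ih fun i hi => h i (Nat.lt_succ_of_lt hi)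
    simp only [traj, h1, h n (Nat.lt_succ_self n)]

omit [MeasurableSpace Ω] in
lemma CEaux_measurable_traj {F : X → U → W → X} {π : X → U} (x : X)
    (hF : Measurable fun p : X × U × W => F p.1 p.2.1 p.2.2) (hπ : Measurable π) (k : ℕ) :
    Measurable fun s : ℕ → W => traj F π x s k := by
  induction k with
  | zero => exact measurable_const
  | succ n ih =>
    have : (fun s : ℕ → W => traj F π x s (n+1))
        = (fun p : X × U × W => F p.1 p.2.1 p.2.2) ∘
          (fun s : ℕ → W => (traj F π x s n, π (traj F π x s n), s n)) := rfl
    rw [this]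
    exact hF.comp ((ih.prodMk ((hπ.comp ih).prodMk (measurable_pi_apply n))))

lemma CEaux_measurable_trajOn {F : X → U → W → X} {π : X → U} (x : X)
    (hF : Measurable fun p : X × U × W => F p.1 p.2.1 p.2.2) (hπ : Measurable π)
    {ξ : ℕ → Ω → W} (hξ : ∀ k, Measurable (ξ k)) (k : ℕ) :
    Measurable (trajOn F π x ξ k) := by
  have : trajOn F π x ξ k = (fun s : ℕ → W => traj F π x s k) ∘ (fun ω i => ξ i ω) := rfl
  rw [this]
  exact (CEaux_measurable_traj x hF hπ k).comp (measurable_pi_lambda _ fun i => hξ i)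

lemma CEaux_indepFun_trajOn_xi {F : X → U → W → X} {π : X → U} (x : X) (wbar : W)
    (hF : Measurable fun p : X × U × W => F p.1 p.2.1 p.2.2) (hπ : Measurable π)
    {ξ : ℕ → Ω → W} (hξ : ∀ k, Measurable (ξ k)) {P : Measure Ω}
    (hind : iIndepFun ξ P) (k : ℕ) :
    IndepFun (trajOn F π x ξ k) (ξ k) P := by
  classical
  have hdisj : Disjoint (Finset.range k) ({k} : Finset ℕ) := by
    simp [Finset.disjoint_left]
    omega
  have base := hind.indepFun_finset (Finset.range k) {k} hdisj hξ
  set ext : ({ i // i ∈ Finset.range k } → W) → (ℕ → W) := fun v i =>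
    if h : i ∈ Finset.range k then v ⟨i, h⟩ else wbar with hext
  have hextm : Measurable ext := by
    apply measurable_pi_lambda
    intro i
    simp only [ext]
    by_cases h : i ∈ Finset.range k
    · simp only [h, dif_pos]
      exact measurable_pi_apply (⟨i, h⟩ : { i // i ∈ Finset.range k })
    · simp only [h, dif_neg, not_false_iff]
      exact measurable_const
  have hg : Measurable fun v : { i // i ∈ Finset.range k } → W => traj F π x (ext v) k :=
    (CEaux_measurable_traj x hF hπ k).comp hextm
  have hh : Measurable fun v : { i // i ∈ ({k} : Finset ℕ) } → W =>
      v ⟨k, Finset.mem_singleton_self k⟩ := measurable_pi_apply _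
  have := base.comp hg hh
  have e1 : (fun v : { i // i ∈ Finset.range k } → W => traj F π x (ext v) k) ∘
      (fun ω (i : { i // i ∈ Finset.range k }) => ξ (i : ℕ) ω) = trajOn F π x ξ k := by
    funext ω
    simp only [Function.comp_apply, trajOn]
    apply CEaux_traj_congr
    intro i hi
    simp [ext, Finset.mem_range, hi]
  have e2 : (fun v : { i // i ∈ ({k} : Finset ℕ) } → W => v ⟨k, Finset.mem_singleton_self k⟩) ∘
      (fun ω (i : { i // i ∈ ({k} : Finset ℕ) }) => ξ (i : ℕ) ω) = ξ k := rfl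
  rwa [e1, e2] at this

omit [MeasurableSpace U] in
lemma CEaux_step_integral {P : Measure Ω} [IsProbabilityMeasure P] {μ : Measure W}
    [IsProbabilityMeasure μ] {Yk : Ω → X} {ξk : Ω → W} (hY : Measurable Yk)
    (hξ : Measurable ξk) (hlaw : P.map ξk = μ) (hind : IndepFun Yk ξk P)
    (G : X → W → ℝ) (hG : Measurable fun p : X × W => G p.1 p.2)
    (C : ℝ) (hC : ∀ y w, |G y w| ≤ C) :
    ∫ ω, G (Yk ω) (ξk ω) ∂P = ∫ ω, ∫ w, G (Yk ω) w ∂μ ∂P := by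
  have : IsProbabilityMeasure (P.map Yk) := Measure.isProbabilityMeasure_map hY.aemeasurable
  have hmap : P.map (fun ω => (Yk ω, ξk ω)) = (P.map Yk).prod μ := by
    rw [← hlaw]
    exact (indepFun_iff_map_prod_eq_prod_map_map hY.aemeasurable hξ.aemeasurable).mp hind
  have hInt : Integrable (fun p : X × W => G p.1 p.2) ((P.map Yk).prod μ) := by
    refine Integrable.mono' (integrable_const C) hG.aestronglyMeasurable ?_
    exact Filter.Eventually.of_forall fun p => by simpa [Real.norm_eq_abs] using hC p.1 p.2
  have h1 : ∫ ω, G (Yk ω) (ξk ω) ∂P = ∫ p : X × W, G p.1 p.2 ∂((P.map Yk).prod μ) := by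
    rw [← hmap, integral_map (hY.aemeasurable.prodMk hξ.aemeasurable) hG.aestronglyMeasurable]
  rw [h1, integral_prod _ hInt,
    integral_map hY.aemeasurable
      (hG.stronglyMeasurable.integral_prod_right').aestronglyMeasurable]

omit [MeasurableSpace X] [MeasurableSpace U] [MeasurableSpace W] [MeasurableSpace Ω] in
lemma CEaux_hitTime_lt_iff {t : X} {Y : ℕ → Ω → X} {ω : Ω}
    (habs : ∀ j l, j ≤ l → Y j ω = t → Y l ω = t) (k : ℕ) :
    (k : ℝ≥0∞) < hitTime t Y ω ↔ Y k ω ≠ t := by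
  constructor
  · intro h hk
    exact absurd (iInf₂_le k hk) (not_le.mpr h)
  · intro h
    have : ((k + 1 : ℕ) : ℝ≥0∞) ≤ hitTime t Y ω := by
      refine le_iInf₂ fun j hj => ?_
      have hjk : ¬ j ≤ k := fun hle => h (habs j k hle hj)
      exact_mod_cast Nat.succ_le_of_lt (not_le.mp hjk)
    refine lt_of_lt_of_le ?_ this
    exact_mod_cast Nat.lt_succ_self k

omit [MeasurableSpace X] [MeasurableSpace U] [MeasurableSpace W] [MeasurableSpace Ω] in
lemma CEaux_eventually_terminal {t : X} {Y : ℕ → Ω → X} {ω : Ω}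
    (habs : ∀ j l, j ≤ l → Y j ω = t → Y l ω = t)
    (h : hitTime t Y ω < ⊤) : ∃ N, ∀ n ≥ N, Y n ω = t := by
  by_contra hc
  push_neg at hc
  have hne : ∀ k, Y k ω ≠ t := by
    intro k hk
    obtain ⟨n, hn, hnt⟩ := hc k
    exact hnt (habs k n hn hk)
  have : hitTime t Y ω = ⊤ := by
    simp [hitTime, hne]
  simp [this] at h

omit [MeasurableSpace U] [MeasurableSpace W] in
lemma CEaux_coe_ereal_of_ne_top {x : ℝ≥0∞} (hx : x ≠ ⊤) :
    (x : EReal) = ((x.toReal : ℝ) : EReal) := by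
  have h2 : (x : EReal) ≠ ⊤ := fun h => hx (EReal.coe_ennreal_eq_top_iff.mp h)
  rw [← EReal.toReal_coe_ennreal, EReal.coe_toReal h2 (EReal.coe_ennreal_ne_bot x)]

end CEAux

/-- State-dependent certainty-equivalent bound: if the local one-step inequality
`f(x', π_CE(x')) + ∫ V*(F(x', π_CE(x'), w)) dμ(w) ≤ V*(x') + 2ε(x') + 2δ(x')` holds at every
nonterminal state visited by the closed loop of the proper certainty-equivalent policy, then
`J^{π_CE}(x) - V*(x) ≤ E[ Σ_{k=0}^{τ-1} (2ε(x_k) + 2δ(x_k)) ]`, stated in `EReal`. -/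
theorem certainty_equivalent_bound_state_dependent
    {X U W Ω : Type*} [MeasurableSpace X] [MeasurableSingletonClass X]
    [MeasurableSpace U] [MeasurableSpace W] [MeasurableSpace Ω]
    (μ : Measure W) [IsProbabilityMeasure μ] (P : Measure Ω) [IsProbabilityMeasure P]
    (t : X) (u0 : U) (Ua : X → Set U) (F : X → U → W → X) (f : X → U → ℝ)
    -- SSP model: nonempty control sets, nonnegative measurable stage cost, measurable dynamics,
    -- absorbing cost-free terminal state
    (hUne : ∀ y, (Ua y).Nonempty) (hfnn : ∀ y u, 0 ≤ f y u)
    (hFmeas : Measurable fun p : X × U × W => F p.1 p.2.1 p.2.2)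
    (hfmeas : Measurable fun p : X × U => f p.1 p.2)
    (hUt : Ua t = {u0}) (hft : f t u0 = 0) (hFt : ∀ w, F t u0 w = t)
    -- V* : bounded measurable, V*(t)=0, Bellman fixed point, well-defined one-step integrals
    (Vstar : X → ℝ) (hVsmeas : Measurable Vstar) (hVsbdd : ∃ C, ∀ y, |Vstar y| ≤ C)
    (hVst : Vstar t = 0) (hVsfix : ∀ y, Vstar y = bellman μ t Ua f F Vstar y)
    (hVsint : ∀ y u, Integrable (fun w => Vstar (F y u w)) μ)
    -- V : bounded surrogate defining the certainty-equivalent policy, with V(t) = 0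
    (V : X → ℝ) (hVmeas : Measurable V) (hVbdd : ∃ C, ∀ y, |V y| ≤ C) (hVt : V t = 0)
    (hVint : ∀ y u, Integrable (fun w => V (F y u w)) μ)
    (wbar : W)
    (πCE : X → U) (hπmeas : Measurable πCE)
    -- certainty-equivalent policy: greedy for the nominal one-step lookahead, minimum attained
    (hπt : πCE t = u0)
    (hce : ∀ y, y ≠ t → πCE y ∈ Ua y ∧ ∀ u ∈ Ua y,
      f y (πCE y) + V (F y (πCE y) wbar) ≤ f y u + V (F y u wbar))
    -- i.i.d. disturbance sequence with common law μ on an abstract probability space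
    (ξ : ℕ → Ω → W) (hξmeas : ∀ k, Measurable (ξ k))
    (hξindep : iIndepFun ξ P)
    (hξlaw : ∀ k, P.map (ξ k) = μ)
    -- properness of the closed loop from x: τ < ∞ a.s. and J(x) < ∞
    (x : X)
    (hproper_tau : ∀ᵐ ω ∂P, hitTime t (trajOn F πCE x ξ) ω < ⊤)
    (hproper_J : totalCost P t f πCE (trajOn F πCE x ξ) < ⊤)
    (εf δf : X → ℝ) (hεf0 : ∀ y, 0 ≤ εf y) (hδf0 : ∀ y, 0 ≤ δf y)
    (hεfmeas : Measurable εf) (hδfmeas : Measurable δf)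
    (honestep : ∀ ω k, trajOn F πCE x ξ k ω ≠ t →
      f (trajOn F πCE x ξ k ω) (πCE (trajOn F πCE x ξ k ω))
        + ∫ w, Vstar (F (trajOn F πCE x ξ k ω) (πCE (trajOn F πCE x ξ k ω)) w) ∂μ
        ≤ Vstar (trajOn F πCE x ξ k ω)
          + 2 * εf (trajOn F πCE x ξ k ω) + 2 * δf (trajOn F πCE x ξ k ω)) :
    (totalCost P t f πCE (trajOn F πCE x ξ) : EReal)
      ≤ (Vstar x : EReal) +
        ((∫⁻ ω, ∑' (k : ℕ), (if (k : ℝ≥0∞) < hitTime t (trajOn F πCE x ξ) ω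
            then ENNReal.ofReal (2 * εf (trajOn F πCE x ξ k ω)
              + 2 * δf (trajOn F πCE x ξ k ω)) else 0) ∂P : ℝ≥0∞) : EReal) := by
  classical
  set Y := trajOn F πCE x ξ with hYdef
  have hYm : ∀ k, Measurable (Y k) := fun k => CEaux_measurable_trajOn x hFmeas hπmeas hξmeas k
  obtain ⟨C, hC⟩ := hVsbdd
  -- absorption of the terminal state
  have habs : ∀ ω, ∀ j l, j ≤ l → Y j ω = t → Y l ω = t := by
    intro ω j l hjl hj
    induction l, hjl using Nat.le_induction with
    | base => exact hj
    | succ n hn ih =>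
      have hrec : Y (n+1) ω = F (Y n ω) (πCE (Y n ω)) (ξ n ω) := rfl
      rw [hrec, ih, hπt, hFt]
  have hlt : ∀ ω (k : ℕ), ((k : ℝ≥0∞) < hitTime t Y ω ↔ Y k ω ≠ t) :=
    fun ω k => CEaux_hitTime_lt_iff (habs ω) k
  -- stage-cost and error functions of the state
  set cg : X → ℝ := fun y => f y (πCE y) with hcgdef
  set g : X → ℝ := fun y => if y = t then 0 else 2 * εf y + 2 * δf y with hgdef
  have hcgm : Measurable cg := hfmeas.comp (measurable_id.prodMk hπmeas)
  have hgm : Measurable g := by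
    refine Measurable.ite ?_ measurable_const ?_
    · exact measurableSet_eq
    · exact ((hεfmeas.const_mul 2).add (hδfmeas.const_mul 2))
  have hcg0 : ∀ y, 0 ≤ cg y := fun y => hfnn y _
  have hg0 : ∀ y, 0 ≤ g y := by
    intro y
    by_cases h : y = t
    · simp [g, h]
    · simp only [g, h, if_neg, if_false]
      have := hεf0 y; have := hδf0 y; linarith
  -- rewrite the two lintegral integrands
  have hcost : ∀ ω (k : ℕ), (if (k : ℝ≥0∞) < hitTime t Y ω
      then ENNReal.ofReal (f (Y k ω) (πCE (Y k ω))) else 0)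
      = ENNReal.ofReal (cg (Y k ω)) := by
    intro ω k
    by_cases h : (k : ℝ≥0∞) < hitTime t Y ω
    · simp [h, cg]
    · have ht' : Y k ω = t := not_not.mp fun hne => h ((hlt ω k).mpr hne)
      simp [h, cg, ht', hπt, hft]
  have herr : ∀ ω (k : ℕ), (if (k : ℝ≥0∞) < hitTime t Y ω
      then ENNReal.ofReal (2 * εf (Y k ω) + 2 * δf (Y k ω)) else 0)
      = ENNReal.ofReal (g (Y k ω)) := by
    intro ω k
    by_cases h : (k : ℝ≥0∞) < hitTime t Y ω
    · have hne := (hlt ω k).mp h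
      simp [h, g, hne]
    · have ht' : Y k ω = t := not_not.mp fun hne => h ((hlt ω k).mpr hne)
      simp [h, g, ht']
  set A : ℕ → ℝ≥0∞ := fun k => ∫⁻ ω, ENNReal.ofReal (cg (Y k ω)) ∂P with hAdef
  set B : ℕ → ℝ≥0∞ := fun k => ∫⁻ ω, ENNReal.ofReal (g (Y k ω)) ∂P with hBdef
  have htot : totalCost P t f πCE Y = ∑' k, A k := by
    unfold totalCost
    have h1 : ∀ ω, (∑' (k : ℕ), (if (k : ℝ≥0∞) < hitTime t Y ω
        then ENNReal.ofReal (f (Y k ω) (πCE (Y k ω))) else 0))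
        = ∑' (k : ℕ), ENNReal.ofReal (cg (Y k ω)) :=
      fun ω => tsum_congr fun k => hcost ω k
    rw [lintegral_congr h1]
    exact lintegral_tsum fun k =>
      (ENNReal.measurable_ofReal.comp (hcgm.comp (hYm k))).aemeasurable
  set S : ℝ≥0∞ := ∫⁻ ω, ∑' (k : ℕ), (if (k : ℝ≥0∞) < hitTime t Y ω
      then ENNReal.ofReal (2 * εf (Y k ω) + 2 * δf (Y k ω)) else 0) ∂P with hSdef
  have hStot : S = ∑' k, B k := by
    rw [hSdef]
    have h1 : ∀ ω, (∑' (k : ℕ), (if (k : ℝ≥0∞) < hitTime t Y ω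
        then ENNReal.ofReal (2 * εf (Y k ω) + 2 * δf (Y k ω)) else 0))
        = ∑' (k : ℕ), ENNReal.ofReal (g (Y k ω)) :=
      fun ω => tsum_congr fun k => herr ω k
    rw [lintegral_congr h1]
    exact lintegral_tsum fun k =>
      (ENNReal.measurable_ofReal.comp (hgm.comp (hYm k))).aemeasurable
  show (totalCost P t f πCE Y : EReal) ≤ (Vstar x : EReal) + (S : EReal)
  by_cases hS : S = ⊤
  · rw [hS, EReal.coe_ennreal_top, EReal.coe_add_top]
    exact le_top
  -- finite case
  have hJne : totalCost P t f πCE Y ≠ ⊤ := hproper_J.ne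
  have hAne : ∀ k, A k ≠ ⊤ := fun k =>
    ne_top_of_le_ne_top (htot ▸ hJne) (ENNReal.le_tsum k)
  have hBne : ∀ k, B k ≠ ⊤ := fun k =>
    ne_top_of_le_ne_top (hStot ▸ hS) (ENNReal.le_tsum k)
  -- integrability and integral formulas
  have hint_cg : ∀ k, Integrable (fun ω => cg (Y k ω)) P := by
    intro k
    refine ⟨(hcgm.comp (hYm k)).aestronglyMeasurable, ?_⟩
    rw [hasFiniteIntegral_iff_ofReal (Filter.Eventually.of_forall fun ω => hcg0 _)]
    exact lt_top_iff_ne_top.2 (hAne k)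
  have hint_g : ∀ k, Integrable (fun ω => g (Y k ω)) P := by
    intro k
    refine ⟨(hgm.comp (hYm k)).aestronglyMeasurable, ?_⟩
    rw [hasFiniteIntegral_iff_ofReal (Filter.Eventually.of_forall fun ω => hg0 _)]
    exact lt_top_iff_ne_top.2 (hBne k)
  have ha : ∀ k, ∫ ω, cg (Y k ω) ∂P = (A k).toReal := fun k =>
    integral_eq_lintegral_of_nonneg_ae (Filter.Eventually.of_forall fun ω => hcg0 _)
      (hcgm.comp (hYm k)).aestronglyMeasurable
  have hb : ∀ k, ∫ ω, g (Y k ω) ∂P = (B k).toReal := fun k =>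
    integral_eq_lintegral_of_nonneg_ae (Filter.Eventually.of_forall fun ω => hg0 _)
      (hgm.comp (hYm k)).aestronglyMeasurable
  have hVYint : ∀ k, Integrable (fun ω => Vstar (Y k ω)) P := fun k =>
    Integrable.mono' (integrable_const C) ((hVsmeas.comp (hYm k)).aestronglyMeasurable)
      (Filter.Eventually.of_forall fun ω => by simpa [Real.norm_eq_abs] using hC (Y k ω))
  -- the one-step Fubini identity
  set G : X → W → ℝ := fun y w => Vstar (F y (πCE y) w) with hGdef
  have hGm : Measurable fun p : X × W => G p.1 p.2 := by
    have : (fun p : X × W => G p.1 p.2)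
        = Vstar ∘ ((fun q : X × U × W => F q.1 q.2.1 q.2.2) ∘
          (fun p : X × W => (p.1, πCE p.1, p.2))) := rfl
    rw [this]
    exact hVsmeas.comp (hFmeas.comp
      (measurable_fst.prodMk ((hπmeas.comp measurable_fst).prodMk measurable_snd)))
  have hGbd : ∀ y w, |G y w| ≤ C := fun y w => hC _
  have hstep_int : ∀ k, ∫ ω, Vstar (Y (k+1) ω) ∂P = ∫ ω, ∫ w, G (Y k ω) w ∂μ ∂P := by
    intro k
    have h0 : (fun ω => Vstar (Y (k+1) ω)) = fun ω => G (Y k ω) (ξ k ω) := rfl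
    rw [h0]
    exact CEaux_step_integral (hYm k) (hξmeas k) (hξlaw k)
      (CEaux_indepFun_trajOn_xi x wbar hFmeas hπmeas hξmeas hξindep k) G hGm C hGbd
  have hinner_int : ∀ k, Integrable (fun ω => ∫ w, G (Y k ω) w ∂μ) P := by
    intro k
    refine Integrable.mono' (integrable_const C)
      (((hGm.stronglyMeasurable.integral_prod_right').comp_measurable (hYm k)).aestronglyMeasurable)
      (Filter.Eventually.of_forall fun ω => ?_)
    calc ‖∫ w, G (Y k ω) w ∂μ‖
        ≤ C * (μ Set.univ).toReal := norm_integral_le_of_norm_le_const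
          (Filter.Eventually.of_forall fun w => by
            simpa [Real.norm_eq_abs] using hGbd (Y k ω) w)
      _ = C := by simp
  -- pointwise one-step inequality
  have hpt : ∀ k ω, cg (Y k ω) + ∫ w, G (Y k ω) w ∂μ ≤ Vstar (Y k ω) + g (Y k ω) := by
    intro k ω
    by_cases h : Y k ω = t
    · simp [cg, g, G, h, hπt, hft, hFt, hVst]
    · have h1 := honestep ω k h
      have h2 : g (Y k ω) = 2 * εf (Y k ω) + 2 * δf (Y k ω) := by simp [g, h]
      have h3 : cg (Y k ω) + ∫ w, G (Y k ω) w ∂μ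
          = f (Y k ω) (πCE (Y k ω)) + ∫ w, Vstar (F (Y k ω) (πCE (Y k ω)) w) ∂μ := rfl
      rw [h2, h3]
      linarith
  set v : ℕ → ℝ := fun k => ∫ ω, Vstar (Y k ω) ∂P with hvdef
  have hstep : ∀ k, (A k).toReal + v (k+1) ≤ v k + (B k).toReal := by
    intro k
    rw [← ha k, ← hb k]
    have hv1 : v (k+1) = ∫ ω, ∫ w, G (Y k ω) w ∂μ ∂P := hstep_int k
    rw [hv1]
    rw [← integral_add (hint_cg k) (hinner_int k), ← integral_add (hVYint k) (hint_g k)]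
    exact integral_mono ((hint_cg k).add (hinner_int k)) ((hVYint k).add (hint_g k))
      fun ω => hpt k ω
  have hv0 : v 0 = Vstar x := by
    have h0 : (fun ω => Vstar (Y 0 ω)) = fun _ => Vstar x := rfl
    rw [hvdef]
    simp only [h0, integral_const, measure_univ, probReal_univ, ENNReal.toReal_one, smul_eq_mul, one_mul]
  have htel : ∀ n, (∑ k ∈ Finset.range n, (A k).toReal) + v n
      ≤ v 0 + ∑ k ∈ Finset.range n, (B k).toReal := by
    intro n
    induction n with
    | zero => simp
    | succ n ih =>
      rw [Finset.sum_range_succ, Finset.sum_range_succ]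
      have := hstep n
      linarith
  -- limits
  have hsummA : Summable fun k => (A k).toReal :=
    ENNReal.summable_toReal (htot ▸ hJne)
  have hsummB : Summable fun k => (B k).toReal :=
    ENNReal.summable_toReal (hStot ▸ hS)
  have hvlim : Tendsto v atTop (nhds 0) := by
    have h0 : (0 : ℝ) = ∫ _ : Ω, (0 : ℝ) ∂P := by simp
    rw [hvdef, h0]
    refine tendsto_integral_of_dominated_convergence (fun _ => C)
      (fun n => (hVsmeas.comp (hYm n)).aestronglyMeasurable) (integrable_const C)
      (fun n => Filter.Eventually.of_forall fun ω => by
        simpa [Real.norm_eq_abs] using hC (Y n ω)) ?_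
    filter_upwards [hproper_tau] with ω hω
    obtain ⟨N, hN⟩ := CEaux_eventually_terminal (habs ω) hω
    refine tendsto_const_nhds.congr' ?_
    refine Filter.eventually_atTop.2 ⟨N, fun n hn => ?_⟩
    show (0 : ℝ) = Vstar (Y n ω)
    rw [hN n hn, hVst]
  have hlimL : Tendsto (fun n => (∑ k ∈ Finset.range n, (A k).toReal) + v n) atTop
      (nhds ((∑' k, (A k).toReal) + 0)) :=
    hsummA.hasSum.tendsto_sum_nat.add hvlim
  have hlimR : Tendsto (fun n => v 0 + ∑ k ∈ Finset.range n, (B k).toReal) atTop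
      (nhds (v 0 + ∑' k, (B k).toReal)) :=
    tendsto_const_nhds.add hsummB.hasSum.tendsto_sum_nat
  have hfin : (∑' k, (A k).toReal) + 0 ≤ v 0 + ∑' k, (B k).toReal :=
    le_of_tendsto_of_tendsto' hlimL hlimR htel
  have hJr : (totalCost P t f πCE Y).toReal = ∑' k, (A k).toReal := by
    rw [htot, ENNReal.tsum_toReal_eq hAne]
  have hSr : S.toReal = ∑' k, (B k).toReal := by
    rw [hStot, ENNReal.tsum_toReal_eq hBne]
  have hreal : (totalCost P t f πCE Y).toReal ≤ Vstar x + S.toReal := by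
    rw [hJr, hSr]
    rw [hv0] at hfin
    linarith
  rw [CEaux_coe_ereal_of_ne_top hJne, CEaux_coe_ereal_of_ne_top hS, ← EReal.coe_add]
  exact_mod_cast hreal
end
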